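/- Fix λ ∈ ℂ with λ ≠ 0 and Re λ > 0, an integer p ≥ 2, and integers n_2, …, n_p. For n ∈ ℤ define the inverse branch g_n(z) = nπ + (1/(2i))·Log((λ + iz)/(λ − iz)), with Log the principal complex logarithm. Set w_2 = (n_2 + 1/2)π and w_{j+1} = g_{n_{j+1}}(w_j) for 2 ≤ j ≤ p−1, and assume that for each 2 ≤ j ≤ p−1 one has λ − i·w_j ≠ 0 and (λ + i·w_j)/(λ − i·w_j) is not a nonpositive real number. Then the sequence of prepoles with itinerary (m, n_2, …, n_p), namely v_m = (g_{n_p} ∘ ⋯ ∘ g_{n_2})((m + 1/2)π), converges to w_p as m → +∞ (m ∈ ℕ). -/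

import Mathlib

open Complex Filter Topology

/-- The tangent family: `f_λ(z) = λ · tan z`, with Mathlib's total complex tangent. -/
noncomputable def ftan (lam : ℂ) : ℂ → ℂ := fun z => lam * Complex.tan z

/-- The inverse branch `g_n(z) = nπ + (1/(2i))·Log((λ + iz)/(λ − iz))` of `f_λ`
with real part near `nπ`. -/
noncomputable def tanBranch (lam : ℂ) (n : ℤ) (z : ℂ) : ℂ :=
  (n : ℂ) * Real.pi +
    (1 / (2 * Complex.I)) * Complex.log ((lam + Complex.I * z) / (lam - Complex.I * z))

/-- `branchComp lam n base k` is the composition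
`g_{n (base+k)} ∘ ⋯ ∘ g_{n (base+1)}` of `k` inverse branches. -/
noncomputable def branchComp (lam : ℂ) (n : ℕ → ℤ) (base : ℕ) : ℕ → ℂ → ℂ
  | 0, z => z
  | k + 1, z => tanBranch lam (n (base + k + 1)) (branchComp lam n base k z)

lemma branchComp_shift (lam : ℂ) (n : ℕ → ℤ) (k : ℕ) (z : ℂ) :
    branchComp lam n 1 (k + 1) z = branchComp lam n 2 k (tanBranch lam (n 2) z) := by
  induction k with
  | zero => simp [branchComp]
  | succ k ih =>
      show tanBranch lam (n (1 + (k+1) + 1)) (branchComp lam n 1 (k+1) z) = _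
      rw [ih]
      show _ = tanBranch lam (n (2 + k + 1)) (branchComp lam n 2 k (tanBranch lam (n 2) z))
      congr 2
      omega

lemma tanBranch_continuousAt (lam : ℂ) (ν : ℤ) (w : ℂ)
    (hne : lam - Complex.I * w ≠ 0)
    (hslit : ∀ x : ℝ, x ≤ 0 → (lam + Complex.I * w) / (lam - Complex.I * w) ≠ (x : ℂ)) :
    ContinuousAt (tanBranch lam ν) w := by
  have hmem : (lam + Complex.I * w) / (lam - Complex.I * w) ∈ slitPlane := by
    rw [Complex.mem_slitPlane_iff]
    by_contra h
    push_neg at h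
    obtain ⟨h1, h2⟩ := h
    set q := (lam + Complex.I * w) / (lam - Complex.I * w)
    exact hslit q.re h1 (by rw [← Complex.re_add_im q, h2]; simp)
  have hratio : ContinuousAt (fun z => (lam + Complex.I * z) / (lam - Complex.I * z)) w := by
    fun_prop (disch := exact hne)
  exact continuousAt_const.add <| continuousAt_const.mul <| hratio.clog hmem

lemma first_step (lam : ℂ) (hre : 0 < lam.re) (ν : ℤ) :
    Filter.Tendsto (fun m : ℕ => tanBranch lam ν (((m : ℂ) + 1 / 2) * Real.pi))
      Filter.atTop (nhds (((ν : ℂ) + 1 / 2) * Real.pi)) := by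
  set r : ℕ → ℝ := fun m => ((m : ℝ) + 1 / 2) * Real.pi with hr
  have hz : ∀ m : ℕ, ((m : ℂ) + 1 / 2) * (Real.pi : ℂ) = ((r m : ℝ) : ℂ) := by
    intro m; push_cast [hr]; ring
  have hrpos : ∀ m : ℕ, 0 < r m := fun m => by
    have := Real.pi_pos
    have : (0:ℝ) < (m : ℝ) + 1/2 := by positivity
    positivity
  have hrtop : Tendsto r atTop atTop := by
    apply Filter.Tendsto.atTop_mul_const Real.pi_pos
    exact tendsto_atTop_add_const_right _ _ tendsto_natCast_atTop_atTop
  set b : ℕ → ℂ := fun m => lam - Complex.I * ((r m : ℝ) : ℂ) with hb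
  have hbne : ∀ m, b m ≠ 0 := by
    intro m h
    have : (b m).re = lam.re := by simp [hb]
    rw [h] at this; simp at this; exact hre.ne this
  -- norm of b tends to atTop
  have hnorm : Tendsto (fun m => ‖b m‖) atTop atTop := by
    apply tendsto_atTop_mono' _ _ (hrtop.atTop_add tendsto_const_nhds (C := -‖lam‖))
    filter_upwards with m
    have h1 : ‖Complex.I * ((r m : ℝ) : ℂ)‖ = r m := by
      simp [abs_of_pos (hrpos m)]
    calc r m + -‖lam‖ = ‖Complex.I * ((r m : ℝ) : ℂ)‖ - ‖lam‖ := by rw [h1]; ring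
      _ ≤ ‖b m‖ := by
          have := norm_sub_norm_le (Complex.I * ((r m : ℝ) : ℂ)) lam
          simpa [hb, norm_sub_rev] using this
  set u : ℕ → ℂ := fun m => (lam + Complex.I * ((r m : ℝ) : ℂ)) / b m with hu
  have hulim : Tendsto u atTop (nhds (-1)) := by
    have hinv : Tendsto (fun m => (b m)⁻¹) atTop (nhds 0) := by
      rw [tendsto_zero_iff_norm_tendsto_zero]
      have := hnorm.inv_tendsto_atTop
      simp only [norm_inv]
      exact this
    have h2 : Tendsto (fun m => -1 + 2 * lam * (b m)⁻¹) atTop (nhds (-1)) := by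
      have := (hinv.const_mul (2 * lam)).const_add (-1 : ℂ)
      simpa using this
    refine h2.congr (fun m => ?_)
    have := hbne m
    field_simp [hu, hb]
    simp only [hu]
    rw [mul_div_cancel₀ _ this]
    simp only [hb]
    ring
  have hub : ∀ m, 0 ≤ (u m).im := by
    intro m
    have hnsq : 0 < Complex.normSq (b m) := Complex.normSq_pos.mpr (hbne m)
    have : (u m).im = (2 * lam.re * r m) / Complex.normSq (b m) := by
      rw [hu, Complex.div_im, hb]
      simp
      ring
    rw [this]
    positivity
  have hulim' : Tendsto u atTop (𝓝[{z : ℂ | 0 ≤ z.im}] (-1)) := by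
    exact tendsto_nhdsWithin_of_tendsto_nhds_of_eventually_within _ hulim
      (Filter.Eventually.of_forall hub)
  have hlog : Tendsto (fun m => Complex.log (u m)) atTop (nhds ((Real.pi : ℂ) * Complex.I)) := by
    have := (Complex.tendsto_log_nhdsWithin_im_nonneg_of_re_neg_of_im_zero
      (z := -1) (by simp) (by simp)).comp hulim'
    simpa [Function.comp_def] using this
  have : Tendsto (fun m : ℕ => tanBranch lam ν (((m : ℂ) + 1 / 2) * Real.pi)) atTop
      (nhds ((ν : ℂ) * Real.pi + (1 / (2 * Complex.I)) * ((Real.pi : ℂ) * Complex.I))) := by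
    have := (hlog.const_mul (1 / (2 * Complex.I))).const_add ((ν : ℂ) * Real.pi)
    refine this.congr (fun m => ?_)
    simp only [tanBranch, hz m, hu, hb]
  have heq : ((ν : ℂ) + 1 / 2) * Real.pi
      = (ν : ℂ) * Real.pi + (1 / (2 * Complex.I)) * ((Real.pi : ℂ) * Complex.I) := by
    have hI : Complex.I ≠ 0 := Complex.I_ne_zero
    field_simp
  rw [heq]
  exact this

/-- Fix `λ` with `λ ≠ 0`, `Re λ > 0`, `p ≥ 2`, and integers `n₂, …, n_p`. With
`w₂ = (n₂ + 1/2)π` and `w_{j+1} = g_{n_{j+1}}(w_j)` (so `w_j = branchComp lam n 2 (j-2) w₂`),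
assume for `2 ≤ j ≤ p−1` that `λ − i·w_j ≠ 0` and `(λ + i·w_j)/(λ − i·w_j)` is not a
nonpositive real. Then the prepoles with itinerary `(m, n₂, …, n_p)`, namely
`v_m = (g_{n_p} ∘ ⋯ ∘ g_{n_2})((m + 1/2)π)`, converge to `w_p` as `m → +∞`. -/
theorem prepoles_accumulate_along_itinerary (lam : ℂ) (hlam : lam ≠ 0)
    (hre : 0 < lam.re) (p : ℕ) (hp : 2 ≤ p) (n : ℕ → ℤ)
    (hreg : ∀ j, 2 ≤ j → j ≤ p - 1 →
      (lam - Complex.I * branchComp lam n 2 (j - 2)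
          (((n 2 : ℂ) + 1 / 2) * Real.pi) ≠ 0) ∧
      (∀ x : ℝ, x ≤ 0 →
        (lam + Complex.I * branchComp lam n 2 (j - 2) (((n 2 : ℂ) + 1 / 2) * Real.pi)) /
          (lam - Complex.I * branchComp lam n 2 (j - 2) (((n 2 : ℂ) + 1 / 2) * Real.pi))
            ≠ (x : ℂ))) :
    Filter.Tendsto
      (fun m : ℕ => branchComp lam n 1 (p - 1) (((m : ℂ) + 1 / 2) * Real.pi))
      Filter.atTop
      (nhds (branchComp lam n 2 (p - 2) (((n 2 : ℂ) + 1 / 2) * Real.pi))) := by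
  obtain ⟨q, rfl⟩ : ∃ q, p = q + 2 := ⟨p - 2, by omega⟩
  have hsub1 : q + 2 - 1 = q + 1 := by omega
  have hsub2 : q + 2 - 2 = q := by omega
  rw [hsub1, hsub2]
  set w2 : ℂ := ((n 2 : ℂ) + 1 / 2) * Real.pi with hw2
  have hcont : ∀ k, k ≤ q → ContinuousAt (branchComp lam n 2 k) w2 := by
    intro k
    induction k with
    | zero => intro _; exact continuousAt_id
    | succ k ih =>
        intro hk
        have hc := ih (by omega)
        have hr := hreg (k + 2) (by omega) (by omega)
        have hs : k + 2 - 2 = k := by omega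
        rw [hs] at hr
        exact (tanBranch_continuousAt lam (n (2 + k + 1)) _ hr.1 hr.2).comp hc
  have hfirst := first_step lam hre (n 2)
  rw [← hw2] at hfirst
  have hmain := ((hcont q le_rfl).tendsto).comp hfirst
  refine hmain.congr fun m => ?_
  exact (branchComp_shift lam n q _).symm
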